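/- Online verification for a one-dimensional hidden direction: Let h* ∈ ℝ^d be a nonzero vector. Instances are pairs (x₀, x₁) where x₀ is a finite set of vectors and x₁ ∈ ℝ^d; x₁ is valid iff x₁ ∈ span(x₀, h*). There is an online algorithm maintaining a subspace S* ⊇ span(h*) (initialized to ℝ^d) that makes at most d+1 mistakes in total: except possibly for the first mistake, every mistake strictly decreases dim(S*), and the invariant h* ∈ S* is preserved by every update. In particular, if S* ⊆ span(x₀), predicting 1[x₁ ∈ span(x₀)] is always correct; if a YES-prediction made when S* ⊆ span(x₀, x₁) and S* ⊄ span(x₀) is wrong, then h* ∈ span(x₀), so updating S* ← S* ∩ span(x₀) preserves the invariant and strictly decreases the dimension. -/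

import Mathlib

private lemma swap_mem {d : ℕ} (X : Submodule ℝ (Fin d → ℝ)) (u v : Fin d → ℝ)
    (h : u ∈ X ⊔ (ℝ ∙ v)) (hu : u ∉ X) : v ∈ X ⊔ (ℝ ∙ u) := by
  rw [Submodule.mem_sup] at h
  obtain ⟨y, hy, z, hz, hyz⟩ := h
  rw [Submodule.mem_span_singleton] at hz
  obtain ⟨b, rfl⟩ := hz
  by_cases hb : b = 0
  · exact absurd (by rw [← hyz, hb]; simpa using hy) hu
  · have hv : v = b⁻¹ • (u - y) := by
      rw [← hyz]; simp [smul_smul, hb]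
    rw [hv]
    exact Submodule.smul_mem _ _ (Submodule.sub_mem _
      (Submodule.mem_sup_right (Submodule.mem_span_singleton_self u))
      (Submodule.mem_sup_left hy))


open Module

/-- Online verification with a one-dimensional hidden direction `h*`: the
algorithm maintains a subspace `S*` (initially `ℝ^d`), predicts YES iff
`x₁ ∈ span(x₀)` or (`S* ≤ span(x₀, x₁)` and `S* ⊄ span(x₀)`), and on mistakes
intersects `S*` with `span(x₀)` (wrong YES) or `span(x₀, x₁)` (wrong NO). Then
the invariant `h* ∈ S*` is preserved, the case-analysis claims hold (predicting
`1[x₁ ∈ span(x₀)]` is correct whenever `S* ≤ span(x₀)`; a wrong YES with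
`S* ≤ span(x₀,x₁)`, `S* ⊄ span(x₀)` forces `h* ∈ span(x₀)`), every mistake
following an earlier mistake strictly decreases `dim S*`, and at most `d + 1`
mistakes are made in total. -/
theorem stmt_18 (d : ℕ) (hstar : Fin d → ℝ) (hns : hstar ≠ 0)
    (X₀ : ℕ → Submodule ℝ (Fin d → ℝ)) (x₁ : ℕ → (Fin d → ℝ))
    (predict : ℕ → Bool) (Sstar : ℕ → Submodule ℝ (Fin d → ℝ))
    (hS0 : Sstar 0 = ⊤)
    (hpred : ∀ t, predict t = true ↔
      (x₁ t ∈ X₀ t ∨ (Sstar t ≤ X₀ t ⊔ (ℝ ∙ x₁ t) ∧ ¬ Sstar t ≤ X₀ t)))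
    (hupd_ok : ∀ t, ((predict t = true) ↔ x₁ t ∈ X₀ t ⊔ (ℝ ∙ hstar)) →
      Sstar (t + 1) = Sstar t)
    (hupd_yes : ∀ t, ¬ ((predict t = true) ↔ x₁ t ∈ X₀ t ⊔ (ℝ ∙ hstar)) →
      predict t = true → Sstar (t + 1) = Sstar t ⊓ X₀ t)
    (hupd_no : ∀ t, ¬ ((predict t = true) ↔ x₁ t ∈ X₀ t ⊔ (ℝ ∙ hstar)) →
      predict t = false → Sstar (t + 1) = Sstar t ⊓ (X₀ t ⊔ (ℝ ∙ x₁ t))) :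
    (∀ t, hstar ∈ Sstar t)
    ∧ (∀ t, Sstar t ≤ X₀ t → (x₁ t ∈ X₀ t ↔ x₁ t ∈ X₀ t ⊔ (ℝ ∙ hstar)))
    ∧ (∀ t, Sstar t ≤ X₀ t ⊔ (ℝ ∙ x₁ t) → ¬ Sstar t ≤ X₀ t →
        x₁ t ∉ X₀ t ⊔ (ℝ ∙ hstar) → hstar ∈ X₀ t)
    ∧ (∀ t, (∃ t' < t, ¬ ((predict t' = true) ↔ x₁ t' ∈ X₀ t' ⊔ (ℝ ∙ hstar))) →
        ¬ ((predict t = true) ↔ x₁ t ∈ X₀ t ⊔ (ℝ ∙ hstar)) →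
        finrank ℝ (Sstar (t + 1)) < finrank ℝ (Sstar t))
    ∧ (∀ N : ℕ,
        {t | t < N ∧ ¬ ((predict t = true) ↔ x₁ t ∈ X₀ t ⊔ (ℝ ∙ hstar))}.ncard
          ≤ d + 1) := by
  classical
  -- claim C (wrong YES forces hstar ∈ X₀), conditioned on the invariant
  have keyC : ∀ t, hstar ∈ Sstar t → Sstar t ≤ X₀ t ⊔ (ℝ ∙ x₁ t) →
      x₁ t ∉ X₀ t ⊔ (ℝ ∙ hstar) → hstar ∈ X₀ t := by
    intro t hm hle hnot
    by_cases hX : hstar ∈ X₀ t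
    · exact hX
    · exact absurd (swap_mem (X₀ t) hstar (x₁ t) (hle hm) hX) hnot
  -- the invariant
  have invA : ∀ t, hstar ∈ Sstar t := by
    intro t
    induction t with
    | zero => rw [hS0]; trivial
    | succ n ih =>
      by_cases hok : (predict n = true) ↔ x₁ n ∈ X₀ n ⊔ (ℝ ∙ hstar)
      · rw [hupd_ok n hok]; exact ih
      · cases hp : predict n with
        | false =>
          rw [hupd_no n hok hp]
          have hmem : x₁ n ∈ X₀ n ⊔ (ℝ ∙ hstar) := by
            by_contra h
            exact hok ⟨fun h' => absurd (hp ▸ h') (by simp), fun h' => absurd h' h⟩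
          have hx0 : x₁ n ∉ X₀ n := fun h => by
            have := (hpred n).2 (Or.inl h); rw [hp] at this; exact Bool.false_ne_true this
          exact Submodule.mem_inf.2 ⟨ih, swap_mem (X₀ n) (x₁ n) hstar hmem hx0⟩
        | true =>
          rw [hupd_yes n hok hp]
          have hnmem : x₁ n ∉ X₀ n ⊔ (ℝ ∙ hstar) := fun h => hok ⟨fun _ => h, fun _ => hp⟩
          have hcase : Sstar n ≤ X₀ n ⊔ (ℝ ∙ x₁ n) := by
            rcases (hpred n).1 hp with h | ⟨h, _⟩
            · exact absurd (Submodule.mem_sup_left h) hnmem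
            · exact h
          exact Submodule.mem_inf.2 ⟨ih, keyC n ih hcase hnmem⟩
  -- every mistake strictly shrinks Sstar
  have strict : ∀ t, ¬ ((predict t = true) ↔ x₁ t ∈ X₀ t ⊔ (ℝ ∙ hstar)) →
      Sstar (t + 1) < Sstar t := by
    intro t hok
    cases hp : predict t with
    | true =>
      rw [hupd_yes t hok hp]
      have hnmem : x₁ t ∉ X₀ t ⊔ (ℝ ∙ hstar) := fun h => hok ⟨fun _ => h, fun _ => hp⟩
      have : ¬ Sstar t ≤ X₀ t := by
        rcases (hpred t).1 hp with h | ⟨_, h⟩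
        · exact absurd (Submodule.mem_sup_left h) hnmem
        · exact h
      exact inf_lt_left.2 this
    | false =>
      rw [hupd_no t hok hp]
      have hmem : x₁ t ∈ X₀ t ⊔ (ℝ ∙ hstar) := by
        by_contra h
        exact hok ⟨fun h' => absurd (hp ▸ h') (by simp), fun h' => absurd h' h⟩
      have hx0 : x₁ t ∉ X₀ t := fun h => by
        have := (hpred t).2 (Or.inl h); rw [hp] at this; exact Bool.false_ne_true this
      have hnot : ¬ ((predict t = true) ∨ True) ∨ True := Or.inr trivial
      have hnle : ¬ Sstar t ≤ X₀ t ⊔ (ℝ ∙ x₁ t) := by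
        have hnp : ¬ (x₁ t ∈ X₀ t ∨ (Sstar t ≤ X₀ t ⊔ (ℝ ∙ x₁ t) ∧ ¬ Sstar t ≤ X₀ t)) := by
          intro h
          have := (hpred t).2 h; rw [hp] at this; exact Bool.false_ne_true this
        intro hle
        apply hnp
        right
        refine ⟨hle, fun hle0 => ?_⟩
        have hX : hstar ∈ X₀ t := hle0 (invA t)
        have : X₀ t ⊔ (ℝ ∙ hstar) = X₀ t :=
          sup_eq_left.2 ((Submodule.span_singleton_le_iff_mem _ _).2 hX)
        rw [this] at hmem
        exact hx0 hmem
      exact inf_lt_left.2 hnle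
  have hfin : ∀ t', ¬ ((predict t' = true) ↔ x₁ t' ∈ X₀ t' ⊔ (ℝ ∙ hstar)) →
      finrank ℝ (Sstar (t' + 1)) < finrank ℝ (Sstar t') :=
    fun t' h => Submodule.finrank_lt_finrank_of_lt (strict t' h)
  -- Sstar is antitone, hence finrank is antitone
  have hanti : ∀ s t, s ≤ t → Sstar t ≤ Sstar s := by
    intro s t hst
    induction t with
    | zero => cases Nat.le_zero.1 hst; exact le_rfl
    | succ n ih =>
      rcases Nat.lt_succ_iff_lt_or_eq.1 (Nat.lt_succ_of_le hst) with h | h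
      · have step : Sstar (n + 1) ≤ Sstar n := by
          by_cases hok : (predict n = true) ↔ x₁ n ∈ X₀ n ⊔ (ℝ ∙ hstar)
          · rw [hupd_ok n hok]
          · exact le_of_lt (strict n hok)
        exact le_trans step (ih (Nat.lt_succ_iff.1 h))
      · rw [h]
  have hrk : ∀ s t, s ≤ t → finrank ℝ (Sstar t) ≤ finrank ℝ (Sstar s) :=
    fun s t hst => Submodule.finrank_mono (hanti s t hst)
  refine ⟨invA, ?_, ?_, ?_, ?_⟩
  · intro t hle
    have hX : hstar ∈ X₀ t := hle (invA t)
    have : X₀ t ⊔ (ℝ ∙ hstar) = X₀ t :=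
      sup_eq_left.2 ((Submodule.span_singleton_le_iff_mem _ _).2 hX)
    rw [this]
  · intro t hle _ hnot
    exact keyC t (invA t) hle hnot
  · intro t _ hmk
    exact hfin t hmk
  · intro N
    have hset : {t | t < N ∧ ¬ ((predict t = true) ↔ x₁ t ∈ X₀ t ⊔ (ℝ ∙ hstar))}
        = ↑((Finset.range N).filter
            (fun t => ¬ ((predict t = true) ↔ x₁ t ∈ X₀ t ⊔ (ℝ ∙ hstar)))) := by
      ext t; simp [and_comm]
    rw [hset, Set.ncard_coe_finset]
    have hbound : ∀ t, finrank ℝ (Sstar t) ≤ d := by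
      intro t
      have := hrk 0 t (Nat.zero_le t)
      rwa [hS0, finrank_top, Module.finrank_pi, Fintype.card_fin] at this
    calc ((Finset.range N).filter _).card
        ≤ (Finset.range (d + 1)).card := by
          apply Finset.card_le_card_of_injOn (fun t => finrank ℝ (Sstar t))
          · intro t ht
            simp only [Finset.coe_range, Set.mem_Iio]
            exact Nat.lt_succ_of_le (hbound t)
          · intro s hs t ht hst
            have hst' : finrank ℝ (Sstar s) = finrank ℝ (Sstar t) := hst
            simp only [Finset.coe_filter, Set.mem_setOf_eq, Finset.mem_range] at hs ht
            by_contra hne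
            rcases Nat.lt_or_ge s t with h | h
            · have h1 : finrank ℝ (Sstar t) ≤ finrank ℝ (Sstar (s + 1)) := hrk _ _ h
              have h2 := hfin s hs.2
              omega --
            · have h' : t < s := lt_of_le_of_ne h (Ne.symm hne)
              have h1 : finrank ℝ (Sstar s) ≤ finrank ℝ (Sstar (t + 1)) := hrk _ _ h'
              have h2 := hfin t ht.2
              omega --
      _ = d + 1 := Finset.card_range _
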